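/- There exists a two-agent, three-good instance that admits no complete allocation which is both EFM and non-wasteful. Concretely, for any 0 < ε < 1/2: good g_0 is indivisible for both agents with v_1(g_0) = v_2(g_0) = 1 − ε/2; good g_1 is divisible for agent 1 with v_1(g_1) = ε and indivisible for agent 2 with v_2(g_1) = 1 − ε; good g_2 is indivisible for agent 1 with v_1(g_2) = 1 − ε and divisible for agent 2 with v_2(g_2) = ε. -/

import Mathlib

open scoped BigOperators Classical

/-- An instance of fair division with subjective divisibility: `n` agents and `m` goods,
each good of total amount 1.  Each agent `i` assigns a nonnegative value `v i g` to each
good `g` and regards each good as either divisible or indivisible for her. -/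
structure FairDivision (n m : ℕ) where
  /-- agent `i`'s value for good `g` -/
  v : Fin n → Fin m → ℝ
  v_nonneg : ∀ i g, 0 ≤ v i g
  /-- `divisible i g` means agent `i` regards good `g` as divisible -/
  divisible : Fin n → Fin m → Prop

namespace FairDivision

variable {n m : ℕ}

/-- Agent `i`'s utility from receiving fraction `t ∈ [0,1]` of good `g`:
`t * v i g` if `g` is divisible for `i`; `v i g` if `g` is indivisible for `i` and `t = 1`;
and `0` if `g` is indivisible for `i` and `t < 1`. -/
noncomputable def frUtil (I : FairDivision n m) (i : Fin n) (g : Fin m) (t : ℝ) : ℝ :=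
  if I.divisible i g then t * I.v i g else if t = 1 then I.v i g else 0

/-- Agent `i`'s (additive) utility for a bundle `b`, given by the fraction `b g` of each good. -/
noncomputable def util (I : FairDivision n m) (i : Fin n) (b : Fin m → ℝ) : ℝ :=
  ∑ g, I.frUtil i g (b g)

/-- Agent `i`'s utility for the bundle `b` with good `g` omitted. -/
noncomputable def utilMinus (I : FairDivision n m) (i : Fin n) (b : Fin m → ℝ) (g : Fin m) : ℝ :=
  ∑ g' ∈ Finset.univ.erase g, I.frUtil i g' (b g')

/-- A complete allocation: fractions in `[0,1]` summing to `1` for every good. -/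
def IsAllocation (I : FairDivision n m) (x : Fin n → Fin m → ℝ) : Prop :=
  (∀ i g, 0 ≤ x i g ∧ x i g ≤ 1) ∧ ∀ g, ∑ i, x i g = 1

/-- A partial allocation: fractions in `[0,1]` summing to at most `1` for every good. -/
def IsPartialAllocation (I : FairDivision n m) (x : Fin n → Fin m → ℝ) : Prop :=
  (∀ i g, 0 ≤ x i g ∧ x i g ≤ 1) ∧ ∀ g, ∑ i, x i g ≤ 1

/-- The maximin share of agent `i`: the supremum, over all fractional `n`-partitions
`P` of the goods, of the minimum over the parts `P j` of agent `i`'s utility. -/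
noncomputable def MMS (I : FairDivision n m) (i : Fin n) : ℝ :=
  sSup { r : ℝ | ∃ P : Fin n → Fin m → ℝ, I.IsAllocation P ∧ r = ⨅ j, I.util i (P j) }

/-- Non-wastefulness: every positive fraction an agent receives yields her positive utility. -/
def NonWasteful (I : FairDivision n m) (x : Fin n → Fin m → ℝ) : Prop :=
  ∀ i g, 0 < x i g → 0 < I.frUtil i g (x i g)

/-- Envy-freeness. -/
def EF (I : FairDivision n m) (x : Fin n → Fin m → ℝ) : Prop :=
  ∀ i j, I.util i (x j) ≤ I.util i (x i)

/-- Envy-freeness for mixed goods: for all agents `i, j`, if every good `j` receives a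
positive fraction of is indivisible for `i`, then `i` does not envy `j` after removing some
such good from `j`'s bundle; otherwise `i` does not envy `j`. -/
def EFM (I : FairDivision n m) (x : Fin n → Fin m → ℝ) : Prop :=
  ∀ i j,
    ((∀ g, 0 < x j g → ¬ I.divisible i g) →
      ∃ g, 0 < x j g ∧ I.utilMinus i (x j) g ≤ I.util i (x i)) ∧
    ((¬ ∀ g, 0 < x j g → ¬ I.divisible i g) → I.util i (x j) ≤ I.util i (x i))

/-- EFXM: as EFM, but the envy must vanish after removing any positively valued such good. -/
def EFXM (I : FairDivision n m) (x : Fin n → Fin m → ℝ) : Prop :=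
  ∀ i j,
    ((∀ g, 0 < x j g → ¬ I.divisible i g) →
      ∀ g, 0 < x j g → 0 < I.v i g → I.utilMinus i (x j) g ≤ I.util i (x i)) ∧
    ((¬ ∀ g, 0 < x j g → ¬ I.divisible i g) → I.util i (x j) ≤ I.util i (x i))

/-- EF1M: if `j`'s bundle contains (a positive fraction of) some good that `i` regards as
indivisible and values positively, the envy of `i` must vanish after removing some such good;
otherwise `i` does not envy `j`. -/
def EF1M (I : FairDivision n m) (x : Fin n → Fin m → ℝ) : Prop :=
  ∀ i j,
    ((∃ g, 0 < x j g ∧ ¬ I.divisible i g ∧ 0 < I.v i g) →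
      ∃ g, 0 < x j g ∧ ¬ I.divisible i g ∧ 0 < I.v i g ∧
        I.utilMinus i (x j) g ≤ I.util i (x i)) ∧
    ((¬ ∃ g, 0 < x j g ∧ ¬ I.divisible i g ∧ 0 < I.v i g) → I.util i (x j) ≤ I.util i (x i))

/-- Pareto optimality (among complete allocations). -/
def ParetoOptimal (I : FairDivision n m) (x : Fin n → Fin m → ℝ) : Prop :=
  ¬ ∃ y, I.IsAllocation y ∧ (∀ i, I.util i (x i) ≤ I.util i (y i)) ∧
    ∃ i, I.util i (x i) < I.util i (y i)

/-- In a 3-agent instance, `B` (a set of whole goods) is a reducible bundle with respect to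
agent `i`: `u_i(B) ≥ (2/3)·MMS_i`, `u_j(M∖B) ≥ 2·MMS_j` for some agent `j ≠ i`, and
`u_k(M∖B) ≥ (4/3)·MMS_k` for the remaining agent `k`. -/
def IsReducible (I : FairDivision 3 m) (B : Finset (Fin m)) (i : Fin 3) : Prop :=
  2 / 3 * I.MMS i ≤ ∑ g ∈ B, I.v i g ∧
    ∃ j, j ≠ i ∧ 2 * I.MMS j ≤ ∑ g ∈ Bᶜ, I.v j g ∧
      ∀ k, k ≠ i → k ≠ j → 4 / 3 * I.MMS k ≤ ∑ g ∈ Bᶜ, I.v k g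

end FairDivision

noncomputable def CEx (ε : ℝ) (h0 : 0 < ε) (h1 : ε < 1/2) : FairDivision 2 3 where
  v := ![![1 - ε/2, ε, 1 - ε], ![1 - ε/2, 1 - ε, ε]]
  v_nonneg := by
    intro i g
    fin_cases i <;> fin_cases g <;> norm_num <;> linarith
  divisible := fun i g => (i = 0 ∧ g = 1) ∨ (i = 1 ∧ g = 2)

lemma CEx_div (ε h0 h1) (i : Fin 2) (g : Fin 3) :
    (CEx ε h0 h1).divisible i g ↔ (i = 0 ∧ g = 1) ∨ (i = 1 ∧ g = 2) := Iff.rfl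

lemma utilMinus_eq (I : FairDivision 2 3) (i : Fin 2) (b : Fin 3 → ℝ) (g : Fin 3) :
    I.utilMinus i b g = I.util i b - I.frUtil i g (b g) :=
  eq_sub_of_add_eq (Finset.sum_erase_add _ _ (Finset.mem_univ g))

lemma no_good (ε : ℝ) (h0 : 0 < ε) (h1 : ε < 1/2) :
    ¬ ∃ x, (CEx ε h0 h1).IsAllocation x ∧ (CEx ε h0 h1).EFM x ∧
      (CEx ε h0 h1).NonWasteful x := by
  rintro ⟨x, ⟨hxb, hxs⟩, hEFM, hNW⟩
  set I := CEx ε h0 h1 with hI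
  -- indivisible goods with positive fraction must be whole
  have hind : ∀ i g, ¬ I.divisible i g → 0 < x i g → x i g = 1 := by
    intro i g hd hpos
    have h := hNW i g hpos
    by_contra hne
    rw [FairDivision.frUtil, if_neg hd, if_neg hne] at h
    exact lt_irrefl _ h
  have hsum : ∀ g : Fin 3, x 0 g + x 1 g = 1 := by
    intro g; have := hxs g; rwa [Fin.sum_univ_two] at this
  have split : ∀ (i : Fin 2) (g : Fin 3), ¬ I.divisible i g →
      (x i g = 1 ∧ x (1 - i) g = 0) ∨ (x i g = 0 ∧ x (1 - i) g = 1) := by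
    intro i g hd
    have hs : x i g + x (1 - i) g = 1 := by
      fin_cases i
      · exact hsum g
      · simpa [add_comm] using hsum g
    rcases lt_or_eq_of_le (hxb i g).1 with hpos | hz
    · have := hind i g hd hpos
      exact Or.inl ⟨this, by linarith⟩
    · exact Or.inr ⟨hz.symm, by linarith⟩
  have h00 := split 0 0 (by rw [CEx_div]; decide)
  have h11 := split 1 1 (by rw [CEx_div]; decide)
  have h02 := split 0 2 (by rw [CEx_div]; decide)
  norm_num at h00 h11 h02
  -- evaluation helper facts
  have ev : ∀ (i : Fin 2) (b : Fin 3 → ℝ),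
      I.util i b = I.frUtil i 0 (b 0) + I.frUtil i 1 (b 1) + I.frUtil i 2 (b 2) := by
    intro i b; rw [FairDivision.util, Fin.sum_univ_three]
  rcases h11 with ⟨e11, e01⟩ | ⟨e11, e01⟩
  · -- agent 1 gets good 1 whole: agent 0 envies via divisible good 1
    rcases h02 with ⟨e02, e12⟩ | ⟨e02, e12⟩
    · -- agent 0 holds good 2; agent 1 envies via divisible good 2 unless…
      rcases h00 with ⟨e00, e10⟩ | ⟨e00, e10⟩
      · -- x0 = (1,0,1), x1 = (0,1,0): agent 1 envies agent 0 (good 2 divisible for 1)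
        have h := (hEFM 1 0).2 (by
          push_neg
          exact ⟨2, by rw [e02]; norm_num, by rw [CEx_div]; decide⟩)
        rw [ev, ev] at h
        simp only [FairDivision.frUtil, CEx_div, hI, CEx, e00, e01, e02, e10, e11, e12] at h
        norm_num [Matrix.cons_val_two, Matrix.vecHead, Matrix.vecTail] at h
        linarith
      · -- x0 = (0,0,1), x1 = (1,1,0): agent 0 envies agent 1 (good 1 divisible for 0)
        have h := (hEFM 0 1).2 (by
          push_neg
          exact ⟨1, by rw [e11]; norm_num, by rw [CEx_div]; decide⟩)
        rw [ev, ev] at h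
        simp only [FairDivision.frUtil, CEx_div, hI, CEx, e00, e01, e02, e10, e11, e12] at h
        norm_num [Matrix.cons_val_two, Matrix.vecHead, Matrix.vecTail] at h
        linarith
    · -- x1 contains goods 1 and 2 wholly: agent 0 envies via divisible good 1
      have h := (hEFM 0 1).2 (by
        push_neg
        exact ⟨1, by rw [e11]; norm_num, by rw [CEx_div]; decide⟩)
      rw [ev, ev] at h
      rcases h00 with ⟨e00, e10⟩ | ⟨e00, e10⟩ <;>
      · simp only [FairDivision.frUtil, CEx_div, hI, CEx, e00, e01, e02, e10, e11, e12] at h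
        norm_num [Matrix.cons_val_two, Matrix.vecHead, Matrix.vecTail] at h
        linarith
  · -- agent 0 gets good 1 whole
    rcases h02 with ⟨e02, e12⟩ | ⟨e02, e12⟩
    · -- x0 contains goods 1 and 2 wholly: agent 1 envies via divisible good 2
      have h := (hEFM 1 0).2 (by
        push_neg
        exact ⟨2, by rw [e02]; norm_num, by rw [CEx_div]; decide⟩)
      rw [ev, ev] at h
      rcases h00 with ⟨e00, e10⟩ | ⟨e00, e10⟩ <;>
      · simp only [FairDivision.frUtil, CEx_div, hI, CEx, e00, e01, e02, e10, e11, e12] at h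
        norm_num [Matrix.cons_val_two, Matrix.vecHead, Matrix.vecTail] at h
        linarith
    · -- x0 = (α,1,0), x1 = (β,0,1): EF1-style failure
      rcases h00 with ⟨e00, e10⟩ | ⟨e00, e10⟩
      · -- a = 0: agent 1 vs agent 0's bundle (1,1,0), all indivisible for 1
        have h := (hEFM 1 0).1 (by
          intro g hg hd
          rw [CEx_div] at hd
          rcases hd with ⟨h', -⟩ | ⟨-, h'⟩
          · exact absurd h' (by decide)
          · rw [h', e02] at hg; exact lt_irrefl _ hg)
        obtain ⟨g, hg, hle⟩ := h
        rw [utilMinus_eq, ev, ev] at hle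
        have hg3 : g = 0 ∨ g = 1 ∨ g = 2 := by omega
        rcases hg3 with rfl | rfl | rfl
        · simp only [FairDivision.frUtil, CEx_div, hI, CEx, e00, e01, e02, e10, e11, e12] at hle
          norm_num [Matrix.cons_val_two, Matrix.vecHead, Matrix.vecTail] at hle
          linarith
        · simp only [FairDivision.frUtil, CEx_div, hI, CEx, e00, e01, e02, e10, e11, e12] at hle
          norm_num [Matrix.cons_val_two, Matrix.vecHead, Matrix.vecTail] at hle
          linarith
        · rw [e02] at hg; exact lt_irrefl _ hg
      · -- a = 1: agent 0 vs agent 1's bundle (1,0,1), all indivisible for 0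
        have h := (hEFM 0 1).1 (by
          intro g hg hd
          rw [CEx_div] at hd
          rcases hd with ⟨-, h'⟩ | ⟨h', -⟩
          · rw [h', e11] at hg; exact lt_irrefl _ hg
          · exact absurd h' (by decide))
        obtain ⟨g, hg, hle⟩ := h
        rw [utilMinus_eq, ev, ev] at hle
        have hg3 : g = 0 ∨ g = 1 ∨ g = 2 := by omega
        rcases hg3 with rfl | rfl | rfl
        · simp only [FairDivision.frUtil, CEx_div, hI, CEx, e00, e01, e02, e10, e11, e12] at hle
          norm_num [Matrix.cons_val_two, Matrix.vecHead, Matrix.vecTail] at hle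
          linarith
        · rw [e11] at hg; exact lt_irrefl _ hg
        · simp only [FairDivision.frUtil, CEx_div, hI, CEx, e00, e01, e02, e10, e11, e12] at hle
          norm_num [Matrix.cons_val_two, Matrix.vecHead, Matrix.vecTail] at hle
          linarith

/-- For any `0 < ε < 1/2`, the concrete two-agent, three-good instance
(`g_0` indivisible for both with value `1 - ε/2`; `g_1` divisible for agent 1 with value `ε`
and indivisible for agent 2 with value `1 - ε`; `g_2` indivisible for agent 1 with value
`1 - ε` and divisible for agent 2 with value `ε`) admits no complete allocation that is both
EFM and non-wasteful. -/
theorem two_agent_efm_nonwasteful_incompatible (ε : ℝ) (hε0 : 0 < ε) (hε1 : ε < 1 / 2) :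
    ∃ I : FairDivision 2 3,
      (∀ i : Fin 2, I.v i 0 = 1 - ε / 2) ∧
      I.v 0 1 = ε ∧ I.v 1 1 = 1 - ε ∧
      I.v 0 2 = 1 - ε ∧ I.v 1 2 = ε ∧
      (∀ i g, I.divisible i g ↔ (i = 0 ∧ g = 1) ∨ (i = 1 ∧ g = 2)) ∧
      ¬ ∃ x, I.IsAllocation x ∧ I.EFM x ∧ I.NonWasteful x := by
  
  refine ⟨CEx ε hε0 hε1, ?_, ?_, ?_, ?_, ?_, fun i g => Iff.rfl, no_good ε hε0 hε1⟩
  · intro i; fin_cases i <;> norm_num [CEx]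
  · norm_num [CEx]
  · norm_num [CEx]
  · norm_num [CEx, Matrix.cons_val_two, Matrix.vecHead, Matrix.vecTail]
  · norm_num [CEx, Matrix.cons_val_two, Matrix.vecHead, Matrix.vecTail]
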